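/- Let M = Σ_{i=0}^k ξ_i·D^i (ξ_i ∈ R, ξ_k ≠ 0) be an x-symmetry driver for the equation u_{xy} = F. Then every coefficient ξ_i lies in 𝓕 (i.e. no ξ_i involves any variable ū_j, j ≥ 1), and the leading coefficient satisfies D̄(ξ_k) = (∂F/∂u_1)·ξ_k. -/
import Mathlib


open MvPolynomial

noncomputable section

/-- Variables of the ring R = K[x, y, u₀, u₁, …, ū₁, ū₂, …].
`Var.ubar j` denotes the variable ū_{j+1}, so that `Var.ubar 0 = ū₁`. -/
inductive Var : Type
  | x : Var
  | y : Var
  | u : ℕ → Var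
  | ubar : ℕ → Var
  deriving DecidableEq

/-- The ring R. -/
abbrev RR (K : Type*) [CommSemiring K] : Type _ := MvPolynomial Var K

variable {K : Type*} [Field K] [CharZero K]

/-- The subring 𝓕 ⊆ R of polynomials not involving any ū_j. -/
def Fcal (K : Type*) [CommSemiring K] : Subalgebra K (RR K) :=
  MvPolynomial.supported K {v : Var | ∀ j : ℕ, v ≠ Var.ubar j}

/-- The set of variables that F may involve: x, y, u₀, u₁, ū₁. -/
def Fvars : Set Var := {Var.x, Var.y, Var.u 0, Var.u 1, Var.ubar 0}

/-- `D` and `Dbar` are the total derivatives with respect to x and y on solutions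
of u_{xy} = F, i.e. the K-derivations determined by mutual recursion by
D(x) = 1, D(y) = 0, D(uᵢ) = u_{i+1}, D(ū_i) = D̄^{i-1}(F) (i ≥ 1);
D̄(y) = 1, D̄(x) = 0, D̄(u₀) = ū₁, D̄(u_i) = D^{i-1}(F) (i ≥ 1), D̄(ū_i) = ū_{i+1}.
(Recall `Var.ubar j` denotes ū_{j+1}.)  -/
structure IsTotalDerPair (F : RR K) (D Dbar : Derivation K (RR K) (RR K)) : Prop where
  hDx : D (X Var.x) = 1
  hDy : D (X Var.y) = 0
  hDu : ∀ i : ℕ, D (X (Var.u i)) = X (Var.u (i + 1))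
  hDubar : ∀ j : ℕ, D (X (Var.ubar j)) = (⇑Dbar)^[j] F
  hDbary : Dbar (X Var.y) = 1
  hDbarx : Dbar (X Var.x) = 0
  hDbaru0 : Dbar (X (Var.u 0)) = X (Var.ubar 0)
  hDbaru : ∀ i : ℕ, Dbar (X (Var.u (i + 1))) = (⇑D)^[i] F
  hDbarubar : ∀ j : ℕ, Dbar (X (Var.ubar j)) = X (Var.ubar (j + 1))

/-- `g` is a symmetry of the equation u_{xy} = F:
D(D̄(g)) − F_{u₁}·D(g) − F_{ū₁}·D̄(g) − F_{u₀}·g = 0. -/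
def IsSymmetry (F : RR K) (D Dbar : Derivation K (RR K) (RR K)) (g : RR K) : Prop :=
  D (Dbar g) - pderiv (Var.u 1) F * D g - pderiv (Var.ubar 0) F * Dbar g
    - pderiv (Var.u 0) F * g = 0

/-- The differential operator Σ_{i=0}^k ξ_i·Df^i applied to `a`. -/
def opApply {A : Type*} [CommRing A] (Df : A → A) (ξ : ℕ → A) (k : ℕ) (a : A) : A :=
  ∑ i ∈ Finset.range (k + 1), ξ i * Df^[i] a

/-- `ξ 0, …, ξ k` are the coefficients of an x-symmetry driver of order `k`:
`ξ k ≠ 0` and Σ ξ_i·D^i maps every x-integral to a symmetry. -/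
def IsDriver (F : RR K) (D Dbar : Derivation K (RR K) (RR K)) (k : ℕ) (ξ : ℕ → RR K) : Prop :=
  ξ k ≠ 0 ∧ ∀ W : RR K, Dbar W = 0 → IsSymmetry F D Dbar (opApply ⇑D ξ k W)

/-- The Fréchet derivative a_* = Σ_{i≥0} (∂a/∂uᵢ)·D^i applied to `g`. -/
def frechet (D : Derivation K (RR K) (RR K)) (a g : RR K) : RR K :=
  ∑ᶠ i : ℕ, pderiv (Var.u i) a * (⇑D)^[i] g

/-- The Lie bracket [f, g] = g_*(f) − f_*(g). -/
def lieBracket (D : Derivation K (RR K) (RR K)) (f g : RR K) : RR K :=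
  frechet D g f - frechet D f g

namespace Statement3Aux

open MvPolynomial

/-- The set of variables whose ū-index is `< m` (non-ū variables always allowed). -/
def U (m : ℕ) : Set Var := {v : Var | ∀ j : ℕ, v = Var.ubar j → j < m}

lemma U_mono {m n : ℕ} (h : m ≤ n) : U m ⊆ U n :=
  fun _ hv j hj => lt_of_lt_of_le (hv j hj) h

lemma x_mem_U (m : ℕ) : Var.x ∈ U m := fun _ hj => by cases hj
lemma y_mem_U (m : ℕ) : Var.y ∈ U m := fun _ hj => by cases hj
lemma u_mem_U (i m : ℕ) : Var.u i ∈ U m := fun _ hj => by cases hj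
lemma ubar_mem_U {j m : ℕ} (h : j < m) : Var.ubar j ∈ U m := fun j' hj' => by
  cases hj'; exact h
lemma ubar_notMem_U {j m : ℕ} (h : m ≤ j) : Var.ubar j ∉ U m :=
  fun hv => absurd (hv j rfl) (not_lt.mpr h)

lemma Fcal_eq (K : Type*) [CommSemiring K] : Fcal K = supported K (U 0) := by
  unfold Fcal U
  congr 1
  ext v
  constructor
  · intro h j hj; exact absurd hj (h j)
  · intro h j hj; exact absurd (h j hj) (Nat.not_lt_zero j)

lemma Fvars_subset_U1 : Fvars ⊆ U 1 := by
  intro v hv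
  simp only [Fvars, Set.mem_insert_iff, Set.mem_singleton_iff] at hv
  rcases hv with rfl | rfl | rfl | rfl | rfl
  · exact x_mem_U 1
  · exact y_mem_U 1
  · exact u_mem_U 0 1
  · exact u_mem_U 1 1
  · exact ubar_mem_U Nat.zero_lt_one

variable {K : Type*} [Field K] [CharZero K]

/-- A derivation maps `supported S` into `supported T` provided it does so on generators. -/
lemma deriv_mem_supported {S T : Set Var} (hST : S ⊆ T)
    (Dv : Derivation K (RR K) (RR K))
    (hD : ∀ v ∈ S, Dv (X v) ∈ supported K T) {p : RR K} (hp : p ∈ supported K S) :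
    Dv p ∈ supported K T := by
  rw [supported_eq_adjoin_X] at hp
  induction hp using Algebra.adjoin_induction with
  | mem q hq =>
    obtain ⟨v, hv, rfl⟩ := hq
    exact hD v hv
  | algebraMap r => rw [Derivation.map_algebraMap]; exact zero_mem _
  | add p q hp hq ihp ihq => rw [map_add]; exact add_mem ihp ihq
  | mul p q hp hq ihp ihq =>
    rw [Derivation.leibniz, smul_eq_mul, smul_eq_mul]
    have hp' : p ∈ supported K T := supported_mono hST hp
    have hq' : q ∈ supported K T := supported_mono hST hq
    exact add_mem (mul_mem hp' ihq) (mul_mem hq' ihp)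

lemma pderiv_mem_supported {S : Set Var} (v : Var) {p : RR K} (hp : p ∈ supported K S) :
    pderiv v p ∈ supported K S := by
  refine deriv_mem_supported (le_refl S) (pderiv v) (fun w hw => ?_) hp
  by_cases h : w = v
  · subst h; rw [pderiv_X_self]; exact one_mem _
  · rw [pderiv_X_of_ne h]; exact zero_mem _

lemma pderiv_eq_zero_of_supported {S : Set Var} {v : Var} (hv : v ∉ S) {p : RR K}
    (hp : p ∈ supported K S) : pderiv v p = 0 := by
  rw [MvPolynomial.mem_supported] at hp
  exact pderiv_eq_zero_of_notMem_vars (fun h => hv (hp h))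

/-- In characteristic zero, if `∂p/∂v = 0` then `v` does not occur in `p`. -/
lemma notMem_vars_of_pderiv_eq_zero {p : RR K} {v : Var} (h : pderiv v p = 0) :
    v ∉ p.vars := by
  intro hv
  rw [mem_vars] at hv
  obtain ⟨s, hs, hsv⟩ := hv
  have hsv' : s v ≠ 0 := Finsupp.mem_support_iff.mp hsv
  have key : coeff (s - Finsupp.single v 1) (pderiv v p) = coeff s p * (s v : K) := by
    conv_lhs => rw [p.as_sum, map_sum]
    rw [coeff_sum]
    rw [Finset.sum_eq_single s]
    · rw [pderiv_monomial, coeff_monomial, if_pos rfl]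
    · intro t ht hts
      rw [pderiv_monomial, coeff_monomial]
      by_cases htv : t v = 0
      · rw [htv]; split <;> simp
      · rw [if_neg]
        intro hEq
        apply hts
        ext w
        by_cases hwv : w = v
        · subst hwv
          have h1 := congrArg (fun f => f w + 1) hEq
          simp [Finsupp.tsub_apply, Finsupp.single_apply] at h1
          omega
        · have h1 := congrArg (fun f => f w) hEq
          simp only [Finsupp.tsub_apply, Finsupp.single_apply, if_neg (Ne.symm hwv),
            Nat.sub_zero] at h1
          exact h1
    · intro hs'; exact absurd hs hs'
  rw [h] at key
  have : coeff s p * (s v : K) ≠ 0 :=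
    mul_ne_zero (MvPolynomial.mem_support_iff.mp hs) (Nat.cast_ne_zero.mpr hsv')
  simp only [coeff_zero] at key
  exact this key.symm

lemma mem_supported_diff {S : Set Var} {p : RR K} {v : Var}
    (hp : p ∈ supported K S) (h : pderiv v p = 0) : p ∈ supported K (S \ {v}) := by
  rw [MvPolynomial.mem_supported] at hp ⊢
  intro w hw
  exact ⟨hp hw, fun hwv => notMem_vars_of_pderiv_eq_zero h (hwv ▸ hw)⟩

section Deriv

variable {K : Type*} [Field K] [CharZero K]
variable {F : RR K} {D Dbar : Derivation K (RR K) (RR K)}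

lemma comm_DDbar (hDD : IsTotalDerPair F D Dbar) (p : RR K) :
    D (Dbar p) = Dbar (D p) := by
  have h : ⁅D, Dbar⁆ = (0 : Derivation K (RR K) (RR K)) := by
    apply derivation_ext
    intro v
    rw [Derivation.commutator_apply, Derivation.zero_apply, sub_eq_zero]
    cases v with
    | x => rw [hDD.hDbarx, hDD.hDx, map_zero, Derivation.map_one_eq_zero]
    | y => rw [hDD.hDbary, hDD.hDy, map_zero, Derivation.map_one_eq_zero]
    | u i =>
      cases i with
      | zero =>
        rw [hDD.hDbaru0, hDD.hDu, hDD.hDubar 0, hDD.hDbaru 0]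
        simp
      | succ i =>
        rw [hDD.hDbaru i, hDD.hDu, hDD.hDbaru (i + 1),
          Function.iterate_succ_apply']
    | ubar j =>
      rw [hDD.hDbarubar j, hDD.hDubar j, hDD.hDubar (j + 1),
        Function.iterate_succ_apply']
  have := DFunLike.congr_fun h p
  rw [Derivation.commutator_apply, Derivation.zero_apply, sub_eq_zero] at this
  exact this

lemma Dbar_iterate_D (hDD : IsTotalDerPair F D Dbar) {W : RR K} (hW : Dbar W = 0) (i : ℕ) :
    Dbar ((⇑D)^[i] W) = 0 := by
  induction i with
  | zero => simpa using hW
  | succ i ih =>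
    rw [Function.iterate_succ_apply', ← comm_DDbar hDD, ih, map_zero]

lemma D_X_mem_U1 (hDD : IsTotalDerPair F D Dbar) (hF : F ∈ supported K Fvars) :
    ∀ v ∈ U 1, D (X v) ∈ supported K (U 1) := by
  intro v hv
  cases v with
  | x => rw [hDD.hDx]; exact one_mem _
  | y => rw [hDD.hDy]; exact zero_mem _
  | u i => rw [hDD.hDu]; exact (X_mem_supported).mpr (u_mem_U (i + 1) 1)
  | ubar j =>
    have hj : j = 0 := Nat.lt_one_iff.mp (hv j rfl)
    subst hj
    rw [hDD.hDubar 0, Function.iterate_zero_apply]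
    exact supported_mono Fvars_subset_U1 hF

lemma iterate_D_F_mem_U1 (hDD : IsTotalDerPair F D Dbar) (hF : F ∈ supported K Fvars)
    (i : ℕ) : (⇑D)^[i] F ∈ supported K (U 1) := by
  induction i with
  | zero => exact supported_mono Fvars_subset_U1 hF
  | succ i ih =>
    rw [Function.iterate_succ_apply']
    exact deriv_mem_supported (le_refl (U 1)) D (D_X_mem_U1 hDD hF) ih

lemma D_mem_U1 (hDD : IsTotalDerPair F D Dbar) (hF : F ∈ supported K Fvars)
    {p : RR K} (hp : p ∈ supported K (U 1)) : D p ∈ supported K (U 1) :=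
  deriv_mem_supported (le_refl (U 1)) D (D_X_mem_U1 hDD hF) hp

lemma Dbar_mem_U1 (hDD : IsTotalDerPair F D Dbar) (hF : F ∈ supported K Fvars)
    {p : RR K} (hp : p ∈ supported K (U 0)) : Dbar p ∈ supported K (U 1) := by
  refine deriv_mem_supported (U_mono (Nat.zero_le 1)) Dbar (fun v hv => ?_) hp
  cases v with
  | x => rw [hDD.hDbarx]; exact zero_mem _
  | y => rw [hDD.hDbary]; exact one_mem _
  | u i =>
    cases i with
    | zero => rw [hDD.hDbaru0]; exact (X_mem_supported).mpr (ubar_mem_U Nat.zero_lt_one)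
    | succ i => rw [hDD.hDbaru i]; exact iterate_D_F_mem_U1 hDD hF i
  | ubar j => exact absurd (hv j rfl) (Nat.not_lt_zero j)

/-- Key computation: for `p` with ū-indices `< m+1`,
`∂_{ū(m+1)} (D̄ p) = ∂_{ūm} p`. -/
lemma pderiv_Dbar (hDD : IsTotalDerPair F D Dbar) (hF : F ∈ supported K Fvars)
    (m : ℕ) {p : RR K} (hp : p ∈ supported K (U (m + 1))) :
    pderiv (Var.ubar (m + 1)) (Dbar p) = pderiv (Var.ubar m) p := by
  rw [supported_eq_adjoin_X] at hp
  induction hp using Algebra.adjoin_induction with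
  | mem q hq =>
    obtain ⟨v, hv, rfl⟩ := hq
    cases v with
    | x =>
      rw [hDD.hDbarx, map_zero, pderiv_X_of_ne (by intro h; cases h)]
    | y =>
      rw [hDD.hDbary, pderiv_one, pderiv_X_of_ne (by intro h; cases h)]
    | u i =>
      have hne : Var.u i ≠ Var.ubar m := by intro h; cases h
      cases i with
      | zero =>
        rw [hDD.hDbaru0, pderiv_X_of_ne, pderiv_X_of_ne hne]
        intro h
        injection h with h'
        exact Nat.succ_ne_zero m h'.symm
      | succ i =>
        rw [hDD.hDbaru i, pderiv_X_of_ne hne]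
        exact pderiv_eq_zero_of_supported (ubar_notMem_U (Nat.one_le_iff_ne_zero.mpr
          (Nat.succ_ne_zero m))) (iterate_D_F_mem_U1 hDD hF i)
    | ubar j =>
      rw [hDD.hDbarubar j]
      by_cases hjm : j = m
      · subst hjm
        rw [pderiv_X_self, pderiv_X_self]
      · rw [pderiv_X_of_ne (by intro h; injection h with h'; exact hjm (Nat.succ_injective h')),
          pderiv_X_of_ne (by intro h; injection h with h'; exact hjm h')]
  | algebraMap r =>
    rw [Derivation.map_algebraMap]
    have : (algebraMap K (RR K) r) = C r := rfl
    rw [map_zero, this, pderiv_C]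
  | add p q hp hq ihp ihq => rw [map_add, map_add, map_add, ihp, ihq]
  | mul p q hp hq ihp ihq =>
    have hp0 : pderiv (Var.ubar (m + 1)) p = 0 :=
      pderiv_eq_zero_of_supported (ubar_notMem_U (le_refl (m + 1))) hp
    have hq0 : pderiv (Var.ubar (m + 1)) q = 0 :=
      pderiv_eq_zero_of_supported (ubar_notMem_U (le_refl (m + 1))) hq
    rw [Derivation.leibniz, smul_eq_mul, smul_eq_mul, map_add, pderiv_mul, pderiv_mul,
      pderiv_mul, hp0, hq0, ihp, ihq]
    ring

/-- The heart of the argument: if `D̄ ξ = F_{u₁} ξ + C` with `C` supported in `U 1`,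
then `ξ` involves no ū-variables. -/
lemma mem_Fcal_of_Dbar_eq (hDD : IsTotalDerPair F D Dbar) (hF : F ∈ supported K Fvars)
    {ξp C : RR K} (hC : C ∈ supported K (U 1))
    (heq : Dbar ξp = pderiv (Var.u 1) F * ξp + C) : ξp ∈ Fcal K := by
  have hF1 : pderiv (Var.u 1) F ∈ supported K (U 1) :=
    pderiv_mem_supported _ (supported_mono Fvars_subset_U1 hF)
  -- a bound on the ū-indices of ξp
  obtain ⟨M, hM⟩ : ∃ M, ξp ∈ supported K (U M) := by
    refine ⟨(ξp.vars.sup fun v => match v with | Var.ubar j => j + 1 | _ => 0), ?_⟩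
    rw [MvPolynomial.mem_supported]
    intro v hv
    intro j hj
    subst hj
    have := Finset.le_sup (f := fun v => match v with | Var.ubar j => j + 1 | _ => 0) hv
    simpa using this
  -- downward induction on the bound
  rw [Fcal_eq]
  induction M with
  | zero => exact hM
  | succ m ih =>
    refine ih ?_
    have hpd : pderiv (Var.ubar m) ξp = 0 := by
      rw [← pderiv_Dbar hDD hF m hM, heq, map_add, pderiv_mul,
        pderiv_eq_zero_of_supported (ubar_notMem_U (Nat.le_add_left 1 m)) hF1,
        pderiv_eq_zero_of_supported (ubar_notMem_U (le_refl (m + 1))) hM,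
        pderiv_eq_zero_of_supported (ubar_notMem_U (Nat.le_add_left 1 m)) hC]
      ring
    have := mem_supported_diff hM hpd
    refine supported_mono ?_ this
    intro v hv
    intro j hj
    subst hj
    have h1 : j < m + 1 := hv.1 j rfl
    have h2 : Var.ubar j ≠ Var.ubar m := hv.2
    have : j ≠ m := fun h => h2 (by rw [h])
    omega

end Deriv

section Driver

variable {K : Type*} [Field K] [CharZero K]
variable (F : RR K) (D Dbar : Derivation K (RR K) (RR K))

/-- The symmetry operator applied to `η`. -/
def Sop (η : RR K) : RR K :=
  D (Dbar η) - pderiv (Var.u 1) F * D η - pderiv (Var.ubar 0) F * Dbar η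
    - pderiv (Var.u 0) F * η

/-- The "leading" operator `D̄ - F_{u₁}` applied to `η`. -/
def Top (η : RR K) : RR K := Dbar η - pderiv (Var.u 1) F * η

def Bcoef (ξ : ℕ → RR K) : ℕ → RR K
  | 0 => 0
  | i + 1 => Top F Dbar (ξ i)

def Acoef (k : ℕ) (ξ : ℕ → RR K) (i : ℕ) : RR K :=
  (if i ≤ k then Sop F D Dbar (ξ i) else 0) + Bcoef F Dbar ξ i

lemma sum_Acoef (hDD : IsTotalDerPair F D Dbar) {k : ℕ} {ξ : ℕ → RR K}
    (hdrv : IsDriver F D Dbar k ξ) {W : RR K} (hW : Dbar W = 0) :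
    ∑ i ∈ Finset.range (k + 2), Acoef F D Dbar k ξ i * (⇑D)^[i] W = 0 := by
  have hDW : ∀ i, Dbar ((⇑D)^[i] W) = 0 := Dbar_iterate_D hDD hW
  have hsym := hdrv.2 W hW
  simp only [IsSymmetry] at hsym
  set g := opApply ⇑D ξ k W with hg
  have hDbarg : Dbar g = ∑ i ∈ Finset.range (k + 1), Dbar (ξ i) * (⇑D)^[i] W := by
    rw [hg, opApply, map_sum]
    refine Finset.sum_congr rfl fun i _ => ?_
    rw [Derivation.leibniz, smul_eq_mul, smul_eq_mul, hDW i, mul_zero, zero_add, mul_comm]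
  have hDDbarg : D (Dbar g)
      = ∑ i ∈ Finset.range (k + 1),
        (D (Dbar (ξ i)) * (⇑D)^[i] W + Dbar (ξ i) * (⇑D)^[i + 1] W) := by
    rw [hDbarg, map_sum]
    refine Finset.sum_congr rfl fun i _ => ?_
    rw [Derivation.leibniz, smul_eq_mul, smul_eq_mul, Function.iterate_succ_apply']
    ring
  have hDg : D g = ∑ i ∈ Finset.range (k + 1),
      (D (ξ i) * (⇑D)^[i] W + ξ i * (⇑D)^[i + 1] W) := by
    rw [hg, opApply, map_sum]
    refine Finset.sum_congr rfl fun i _ => ?_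
    rw [Derivation.leibniz, smul_eq_mul, smul_eq_mul, Function.iterate_succ_apply']
    ring
  have hmain : ∑ i ∈ Finset.range (k + 1),
      (Sop F D Dbar (ξ i) * (⇑D)^[i] W + Top F Dbar (ξ i) * (⇑D)^[i + 1] W) = 0 := by
    have hrw : ∑ i ∈ Finset.range (k + 1),
        (Sop F D Dbar (ξ i) * (⇑D)^[i] W + Top F Dbar (ξ i) * (⇑D)^[i + 1] W)
        = D (Dbar g) - pderiv (Var.u 1) F * D g - pderiv (Var.ubar 0) F * Dbar g
          - pderiv (Var.u 0) F * g := by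
      rw [hDDbarg, hDg, hDbarg, hg, opApply]
      rw [Finset.mul_sum, Finset.mul_sum, Finset.mul_sum, ← Finset.sum_sub_distrib,
        ← Finset.sum_sub_distrib, ← Finset.sum_sub_distrib]
      refine Finset.sum_congr rfl fun i _ => ?_
      simp only [Sop, Top]
      ring
    rw [hrw]
    exact hsym
  have h1 : ∑ i ∈ Finset.range (k + 2),
      (if i ≤ k then Sop F D Dbar (ξ i) else 0) * (⇑D)^[i] W
      = ∑ i ∈ Finset.range (k + 1), Sop F D Dbar (ξ i) * (⇑D)^[i] W := by
    rw [Finset.sum_range_succ, if_neg (by omega), zero_mul, add_zero]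
    refine Finset.sum_congr rfl fun i hi => ?_
    rw [if_pos (Nat.lt_succ_iff.mp (Finset.mem_range.mp hi))]
  have h2 : ∑ i ∈ Finset.range (k + 2), Bcoef F Dbar ξ i * (⇑D)^[i] W
      = ∑ i ∈ Finset.range (k + 1), Top F Dbar (ξ i) * (⇑D)^[i + 1] W := by
    rw [Finset.sum_range_succ']
    simp [Bcoef]
  calc ∑ i ∈ Finset.range (k + 2), Acoef F D Dbar k ξ i * (⇑D)^[i] W
      = ∑ i ∈ Finset.range (k + 2),
        ((if i ≤ k then Sop F D Dbar (ξ i) else 0) * (⇑D)^[i] W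
          + Bcoef F Dbar ξ i * (⇑D)^[i] W) := by
        refine Finset.sum_congr rfl fun i _ => ?_
        rw [Acoef, add_mul]
    _ = 0 := by rw [Finset.sum_add_distrib, h1, h2, ← Finset.sum_add_distrib]; exact hmain

lemma Dbar_xpow (hDD : IsTotalDerPair F D Dbar) (n : ℕ) :
    Dbar ((X Var.x : RR K) ^ n) = 0 := by
  rw [Derivation.leibniz_pow, hDD.hDbarx, smul_zero, smul_zero]

lemma D_xpow (hDD : IsTotalDerPair F D Dbar) (n : ℕ) :
    D ((X Var.x : RR K) ^ n) = (n : RR K) * X Var.x ^ (n - 1) := by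
  rw [Derivation.leibniz_pow, hDD.hDx, smul_eq_mul, mul_one, nsmul_eq_mul]

lemma iterate_D_xpow (hDD : IsTotalDerPair F D Dbar) (n i : ℕ) :
    (⇑D)^[i] ((X Var.x : RR K) ^ n)
      = (n.descFactorial i : RR K) * X Var.x ^ (n - i) := by
  induction i with
  | zero => simp
  | succ i ih =>
    rw [Function.iterate_succ_apply', ih, Derivation.leibniz, smul_eq_mul, smul_eq_mul,
      D_xpow F D Dbar hDD]
    have hcast : D ((n.descFactorial i : RR K)) = 0 := by
      rw [← map_natCast (algebraMap K (RR K)) (n.descFactorial i), Derivation.map_algebraMap]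
    rw [hcast, mul_zero, add_zero, Nat.descFactorial_succ, Nat.cast_mul, Nat.sub_sub]
    ring

lemma Acoef_eq_zero (hDD : IsTotalDerPair F D Dbar) {k : ℕ} {ξ : ℕ → RR K}
    (hdrv : IsDriver F D Dbar k ξ) :
    ∀ n ≤ k + 1, Acoef F D Dbar k ξ n = 0 := by
  intro n
  induction n using Nat.strong_induction_on with
  | _ n ih =>
    intro hn
    have hsum := sum_Acoef F D Dbar hDD hdrv (Dbar_xpow F D Dbar hDD n)
    have hsum' : ∑ i ∈ Finset.range (k + 2),
        Acoef F D Dbar k ξ i * ((n.descFactorial i : RR K) * X Var.x ^ (n - i)) = 0 := by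
      rw [← hsum]
      exact Finset.sum_congr rfl fun i _ => by rw [iterate_D_xpow F D Dbar hDD]
    rw [Finset.sum_eq_single n] at hsum'
    · rw [Nat.sub_self, pow_zero, Nat.descFactorial_self, mul_one] at hsum'
      have hfac : ((Nat.factorial n : ℕ) : RR K) ≠ 0 := by
        have h1 : ((Nat.factorial n : ℕ) : RR K) = C ((Nat.factorial n : ℕ) : K) := by
          rw [← map_natCast (C : K →+* RR K) (Nat.factorial n)]
        rw [h1]
        simp only [ne_eq, MvPolynomial.C_eq_zero]
        exact_mod_cast Nat.factorial_ne_zero n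
      rcases mul_eq_zero.mp hsum' with h | h
      · exact h
      · exact absurd h hfac
    · intro i hi hin
      rcases Nat.lt_or_ge i n with hlt | hge
      · rw [ih i hlt (by omega), zero_mul]
      · have h0 : n.descFactorial i = 0 :=
          Nat.descFactorial_eq_zero_iff_lt.mpr (by omega)
        rw [h0, Nat.cast_zero, zero_mul, mul_zero]
    · intro h
      exact absurd (Finset.mem_range.mpr (by omega)) h

end Driver

end Statement3Aux


/-- the coefficients of any x-symmetry driver lie in 𝓕 and the leading
coefficient satisfies D̄(ξ_k) = F_{u₁}·ξ_k. -/
theorem statement3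
    (F : RR K) (hF : F ∈ MvPolynomial.supported K Fvars)
    (D Dbar : Derivation K (RR K) (RR K)) (hDD : IsTotalDerPair F D Dbar)
    (k : ℕ) (ξ : ℕ → RR K) (hdrv : IsDriver F D Dbar k ξ) :
    (∀ i ≤ k, ξ i ∈ Fcal K) ∧ Dbar (ξ k) = pderiv (Var.u 1) F * ξ k := by
  have hA := Statement3Aux.Acoef_eq_zero F D Dbar hDD hdrv
  have htop : Dbar (ξ k) = pderiv (Var.u 1) F * ξ k := by
    have h := hA (k + 1) (le_refl _)
    simp only [Statement3Aux.Acoef, Statement3Aux.Bcoef, if_neg (by omega : ¬ k + 1 ≤ k),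
      zero_add, Statement3Aux.Top] at h
    linear_combination h
  have hC : ∀ i, i < k →
      Statement3Aux.Sop F D Dbar (ξ (i + 1)) + (Dbar (ξ i) - pderiv (Var.u 1) F * ξ i) = 0 := by
    intro i hik
    have h := hA (i + 1) (by omega)
    simp only [Statement3Aux.Acoef, Statement3Aux.Bcoef, if_pos (by omega : i + 1 ≤ k),
      Statement3Aux.Top] at h
    exact h
  have hSopMem : ∀ η : RR K, η ∈ Fcal K →
      Statement3Aux.Sop F D Dbar η ∈ MvPolynomial.supported K (Statement3Aux.U 1) := by
    intro η hη
    rw [Statement3Aux.Fcal_eq] at hη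
    have hη1 : η ∈ MvPolynomial.supported K (Statement3Aux.U 1) :=
      MvPolynomial.supported_mono (Statement3Aux.U_mono (by omega)) hη
    have h1 := Statement3Aux.Dbar_mem_U1 hDD hF hη
    have h2 := Statement3Aux.D_mem_U1 hDD hF h1
    have h3 := Statement3Aux.D_mem_U1 hDD hF hη1
    have hFU : F ∈ MvPolynomial.supported K (Statement3Aux.U 1) :=
      MvPolynomial.supported_mono Statement3Aux.Fvars_subset_U1 hF
    have hF1 := Statement3Aux.pderiv_mem_supported (Var.u 1) hFU
    have hFb := Statement3Aux.pderiv_mem_supported (Var.ubar 0) hFU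
    have hF0 := Statement3Aux.pderiv_mem_supported (Var.u 0) hFU
    simp only [Statement3Aux.Sop]
    exact sub_mem (sub_mem (sub_mem h2 (mul_mem hF1 h3)) (mul_mem hFb h1))
      (mul_mem hF0 hη1)
  have hmem : ∀ d i, i + d = k → ξ i ∈ Fcal K := by
    intro d
    induction d with
    | zero =>
      intro i hi
      have hik : i = k := by omega
      subst hik
      exact Statement3Aux.mem_Fcal_of_Dbar_eq hDD hF (zero_mem _) (by rw [htop]; ring)
    | succ d ih =>
      intro i hi
      have h1 : ξ (i + 1) ∈ Fcal K := ih (i + 1) (by omega)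
      have h2 := hC i (by omega)
      refine Statement3Aux.mem_Fcal_of_Dbar_eq hDD hF
        (neg_mem (hSopMem _ h1)) (C := -(Statement3Aux.Sop F D Dbar (ξ (i + 1)))) ?_
      linear_combination h2
  exact ⟨fun i hik => hmem (k - i) i (by omega), htop⟩
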